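/- Let n ≥ 2 and M ≥ 2. For each multi-index k = (k₁,…,k_n) ∈ {0,1,…,M−1}ⁿ let C_k = Π_{i=1}^{n} [k_i/M, (k_i+1)/M] be the corresponding grid cell of [0,1]ⁿ, and let B = {k ∈ {0,…,M−1}ⁿ : at most one coordinate of k is nonzero} (so |B| = (M−1)·n + 1). Suppose f, g : [0,1]ⁿ → ℝ are continuous functions each of which is affine on every cell C_k. If f = g on C_k for every k ∈ B, then f = g on all of [0,1]ⁿ. -/
import Mathlib

open Set Finset

namespace GridBD

lemma sum_update (n : ℕ) (a v : Fin n → ℝ) (i : Fin n) (b : ℝ) :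
    (∑ j, a j * Function.update v i b j) = (∑ j, a j * v j) + a i * (b - v i) := by
  have h : ∀ j : Fin n, a j * Function.update v i b j
      = a j * v j + (if j = i then a i * (b - v i) else 0) := by
    intro j
    by_cases hj : j = i
    · subst hj; simp [Function.update_self]; ring
    · simp [Function.update_of_ne hj, hj]
  rw [Finset.sum_congr rfl (fun j _ => h j), Finset.sum_add_distrib]
  simp

lemma coeff_eq (n : ℕ) (a a' : Fin n → ℝ) (c c' : ℝ) (v : Fin n → ℝ) (j : Fin n) (b : ℝ)
    (hb : b ≠ v j)
    (h1 : (∑ i, a i * v i) + c = (∑ i, a' i * v i) + c')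
    (h2 : (∑ i, a i * Function.update v j b i) + c
        = (∑ i, a' i * Function.update v j b i) + c') :
    a j = a' j := by
  rw [sum_update, sum_update] at h2
  have hbv : b - v j ≠ 0 := sub_ne_zero.mpr hb
  have h3 : a j * (b - v j) = a' j * (b - v j) := by linarith
  exact mul_right_cancel₀ hbv h3

end GridBD

/-- Boundary determination on the standard grid: two
continuous functions on `[0,1]ⁿ`, each affine on every grid cell of mesh
`1/M`, that agree on all cells whose multi-index has at most one nonzero
coordinate, agree on all of `[0,1]ⁿ`. -/
theorem grid_boundary_determination
    (n M : ℕ) (hn : 2 ≤ n) (hM : 2 ≤ M)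
    (f g : (Fin n → ℝ) → ℝ)
    (hfc : ContinuousOn f (Icc 0 1)) (hgc : ContinuousOn g (Icc 0 1))
    (hfa : ∀ k : Fin n → ℕ, (∀ i, k i < M) →
      ∃ (a : Fin n → ℝ) (c : ℝ), ∀ x : Fin n → ℝ,
        (∀ i, (k i : ℝ) / M ≤ x i ∧ x i ≤ ((k i : ℝ) + 1) / M) →
        f x = (∑ j, a j * x j) + c)
    (hga : ∀ k : Fin n → ℕ, (∀ i, k i < M) →
      ∃ (a : Fin n → ℝ) (c : ℝ), ∀ x : Fin n → ℝ,
        (∀ i, (k i : ℝ) / M ≤ x i ∧ x i ≤ ((k i : ℝ) + 1) / M) →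
        g x = (∑ j, a j * x j) + c)
    (hbd : ∀ k : Fin n → ℕ, (∀ i, k i < M) →
      (∀ i j, i ≠ j → k i = 0 ∨ k j = 0) →
      ∀ x : Fin n → ℝ,
        (∀ i, (k i : ℝ) / M ≤ x i ∧ x i ≤ ((k i : ℝ) + 1) / M) → f x = g x) :
    ∀ x ∈ Icc (0 : Fin n → ℝ) 1, f x = g x := by
  have hM0 : (0:ℝ) < (M:ℝ) := by exact_mod_cast Nat.pos_of_ne_zero (by omega)
  have hdiv : ∀ p q : ℝ, p ≤ q → p / (M:ℝ) ≤ q / (M:ℝ) := fun p q h =>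
    (div_le_div_iff_of_pos_right hM0).mpr h
  -- combined affine representation for f - g
  have ha : ∀ k : Fin n → ℕ, (∀ i, k i < M) →
      ∃ (a : Fin n → ℝ) (c : ℝ), ∀ x : Fin n → ℝ,
        (∀ i, (k i : ℝ) / M ≤ x i ∧ x i ≤ ((k i : ℝ) + 1) / M) →
        f x - g x = (∑ j, a j * x j) + c := by
    intro k hk
    obtain ⟨af, cf, hf⟩ := hfa k hk
    obtain ⟨ag, cg, hg⟩ := hga k hk
    refine ⟨fun j => af j - ag j, cf - cg, fun x hx => ?_⟩
    rw [hf x hx, hg x hx,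
      show (∑ j, (af j - ag j) * x j) = (∑ j, af j * x j) - ∑ j, ag j * x j by
        rw [← Finset.sum_sub_distrib]; exact Finset.sum_congr rfl fun j _ => by ring]
    ring
  -- the vertex of cell k lies in cell k
  have hvm : ∀ k : Fin n → ℕ, ∀ i, (k i : ℝ)/M ≤ (fun m => (k m : ℝ)/M) i ∧
      (fun m => (k m : ℝ)/M) i ≤ ((k i : ℝ)+1)/M := by
    intro k i
    exact ⟨le_rfl, hdiv _ _ (by linarith)⟩
  -- the vertex updated at j also lies in cell k
  have hvm' : ∀ (k : Fin n → ℕ) (j : Fin n), ∀ i,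
      (k i : ℝ)/M ≤ Function.update (fun m => (k m : ℝ)/M) j (((k j:ℝ)+1)/M) i ∧
      Function.update (fun m => (k m : ℝ)/M) j (((k j:ℝ)+1)/M) i ≤ ((k i : ℝ)+1)/M := by
    intro k j i
    by_cases hij : i = j
    · subst hij
      rw [Function.update_self]
      exact ⟨hdiv _ _ (by linarith), le_rfl⟩
    · rw [Function.update_of_ne hij]
      exact ⟨le_rfl, hdiv _ _ (by linarith)⟩
  -- the vertex of cell k lies in the adjacent cell k' = update k i' (k i' - 1)
  have hadj : ∀ (k : Fin n → ℕ) (i' : Fin n), k i' ≠ 0 →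
      ∀ i, ((Function.update k i' (k i' - 1) i : ℕ) : ℝ)/M ≤ (fun m => (k m:ℝ)/M) i ∧
        (fun m => (k m:ℝ)/M) i ≤ (((Function.update k i' (k i' - 1) i : ℕ) : ℝ)+1)/M := by
    intro k i' hki i
    by_cases hii : i = i'
    · subst hii
      rw [Function.update_self]
      have hc : ((k i - 1 : ℕ) : ℝ) = (k i : ℝ) - 1 := by
        rw [Nat.cast_sub (Nat.one_le_iff_ne_zero.mpr hki)]; simp
      rw [hc]
      exact ⟨hdiv _ _ (by linarith), hdiv _ _ (by linarith)⟩
    · rw [Function.update_of_ne hii]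
      exact ⟨le_rfl, hdiv _ _ (by linarith)⟩
  -- the updated vertex lies in the adjacent cell too (j ≠ i')
  have hadj' : ∀ (k : Fin n → ℕ) (i' j : Fin n), k i' ≠ 0 → j ≠ i' →
      ∀ i, ((Function.update k i' (k i' - 1) i : ℕ) : ℝ)/M ≤
            Function.update (fun m => (k m:ℝ)/M) j (((k j:ℝ)+1)/M) i ∧
        Function.update (fun m => (k m:ℝ)/M) j (((k j:ℝ)+1)/M) i
            ≤ (((Function.update k i' (k i' - 1) i : ℕ) : ℝ)+1)/M := by
    intro k i' j hki hji i
    by_cases hij : i = j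
    · subst hij
      rw [Function.update_self, Function.update_of_ne hji]
      exact ⟨hdiv _ _ (by linarith), le_rfl⟩
    · rw [Function.update_of_ne hij]
      exact hadj k i' hki i
  have hbne : ∀ k : Fin n → ℕ, ∀ j : Fin n,
      ((k j : ℝ)+1)/M ≠ (fun m => (k m:ℝ)/M) j := by
    intro k j
    have : (k j:ℝ)/M < ((k j:ℝ)+1)/M := (div_lt_div_iff_of_pos_right hM0).mpr (by linarith)
    exact this.ne'
  -- key: all linear coefficients of f - g vanish on every cell
  have key : ∀ (N : ℕ) (j : Fin n) (k : Fin n → ℕ), (∀ i, k i < M) →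
      (∑ i ∈ Finset.univ.erase j, k i) = N →
      ∀ (a : Fin n → ℝ) (c : ℝ),
        (∀ x : Fin n → ℝ, (∀ i, (k i : ℝ)/M ≤ x i ∧ x i ≤ ((k i:ℝ)+1)/M) →
          f x - g x = (∑ m, a m * x m) + c) → a j = 0 := by
    intro N
    induction N using Nat.strong_induction_on with
    | _ N ih =>
      intro j k hk hsum a c hrep
      by_cases hz : ∀ i, i ≠ j → k i = 0
      · -- boundary cell: f = g there
        have hb : ∀ i i', i ≠ i' → k i = 0 ∨ k i' = 0 := by
          intro i i' hii'
          by_cases hij : i = j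
          · subst hij
            exact Or.inr (hz i' fun h => hii' h.symm)
          · exact Or.inl (hz i hij)
        have hzero : ∀ x : Fin n → ℝ,
            (∀ i, (k i:ℝ)/M ≤ x i ∧ x i ≤ ((k i:ℝ)+1)/M) →
            (∑ m, a m * x m) + c = (∑ m, (fun _ => (0:ℝ)) m * x m) + 0 := by
          intro x hx
          rw [← hrep x hx]
          have := hbd k hk hb x hx
          simp [this]
        exact GridBD.coeff_eq n a (fun _ => 0) c 0 (fun m => (k m:ℝ)/M) j
          (((k j:ℝ)+1)/M) (hbne k j) (hzero _ (hvm k)) (hzero _ (hvm' k j))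
      · push_neg at hz
        obtain ⟨i', hij', hki'⟩ := hz
        set k' := Function.update k i' (k i' - 1) with hk'def
        have hk' : ∀ i, k' i < M := by
          intro i
          by_cases hii : i = i'
          · subst hii; rw [hk'def, Function.update_self]
            have := hk i; omega
          · rw [hk'def, Function.update_of_ne hii]; exact hk i
        obtain ⟨a', c', hrep'⟩ := ha k' hk'
        have hji' : j ≠ i' := fun h => hij' h.symm
        have h1 : (∑ m, a m * (fun m => (k m:ℝ)/M) m) + c
            = (∑ m, a' m * (fun m => (k m:ℝ)/M) m) + c' := by
          rw [← hrep _ (hvm k), ← hrep' _ (hadj k i' hki')]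
        have h2 : (∑ m, a m * Function.update (fun m => (k m:ℝ)/M) j
              (((k j:ℝ)+1)/M) m) + c
            = (∑ m, a' m * Function.update (fun m => (k m:ℝ)/M) j
              (((k j:ℝ)+1)/M) m) + c' := by
          rw [← hrep _ (hvm' k j), ← hrep' _ (hadj' k i' j hki' hji')]
        have haj : a j = a' j :=
          GridBD.coeff_eq n a a' c c' _ j _ (hbne k j) h1 h2
        have hmem : i' ∈ Finset.univ.erase j :=
          Finset.mem_erase.mpr ⟨hij', Finset.mem_univ i'⟩
        have e1 : ∑ m ∈ Finset.univ.erase j, k' m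
            = (k i' - 1) + ∑ m ∈ (Finset.univ.erase j).erase i', k m := by
          rw [hk'def, Finset.sum_update_of_mem hmem]; simp [Finset.erase_eq]
        have e2 : ∑ m ∈ Finset.univ.erase j, k m
            = k i' + ∑ m ∈ (Finset.univ.erase j).erase i', k m :=
          (Finset.add_sum_erase _ _ hmem).symm
        have hlt : (∑ m ∈ Finset.univ.erase j, k' m) < N := by omega
        rw [haj]
        exact ih _ hlt j k' hk' rfl a' c' hrep'
  -- key2: f = g at the vertex of every cell
  have key2 : ∀ (N : ℕ) (k : Fin n → ℕ), (∀ i, k i < M) → (∑ i, k i) = N →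
      f (fun m => (k m:ℝ)/M) = g (fun m => (k m:ℝ)/M) := by
    intro N
    induction N using Nat.strong_induction_on with
    | _ N ih =>
      intro k hk hsum
      by_cases hz : ∀ i, k i = 0
      · exact hbd k hk (fun i i' _ => Or.inl (hz i)) _ (hvm k)
      · push_neg at hz
        obtain ⟨i', hki'⟩ := hz
        set k' := Function.update k i' (k i' - 1) with hk'def
        have hk' : ∀ i, k' i < M := by
          intro i
          by_cases hii : i = i'
          · subst hii; rw [hk'def, Function.update_self]
            have := hk i; omega
          · rw [hk'def, Function.update_of_ne hii]; exact hk i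
        obtain ⟨a', c', hrep'⟩ := ha k' hk'
        have hz' : ∀ j, a' j = 0 := fun j => key _ j k' hk' rfl a' c' hrep'
        have e1 : f (fun m => (k m:ℝ)/M) - g (fun m => (k m:ℝ)/M) = c' := by
          rw [hrep' _ (hadj k i' hki')]; simp [hz']
        have e2 : f (fun m => (k' m:ℝ)/M) - g (fun m => (k' m:ℝ)/M) = c' := by
          rw [hrep' _ (hvm k')]; simp [hz']
        have hmem : i' ∈ (Finset.univ : Finset (Fin n)) := Finset.mem_univ i'
        have es1 : ∑ m, k' m = (k i' - 1) + ∑ m ∈ Finset.univ.erase i', k m := by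
          rw [hk'def, Finset.sum_update_of_mem hmem]; simp [Finset.erase_eq]
        have es2 : ∑ m, k m = k i' + ∑ m ∈ Finset.univ.erase i', k m :=
          (Finset.add_sum_erase _ _ hmem).symm
        have hlt : (∑ m, k' m) < N := by omega
        have e3 := ih _ hlt k' hk' rfl
        linarith
  -- conclude
  intro x hx
  have hx0 : ∀ i, 0 ≤ x i := fun i => hx.1 i
  have hx1 : ∀ i, x i ≤ 1 := fun i => hx.2 i
  set k : Fin n → ℕ := fun i => min (⌊(M:ℝ) * x i⌋₊) (M - 1) with hkdef
  have hk : ∀ i, k i < M := fun i => lt_of_le_of_lt (min_le_right _ _) (by omega)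
  have hxc : ∀ i, (k i : ℝ)/M ≤ x i ∧ x i ≤ ((k i:ℝ)+1)/M := by
    intro i
    constructor
    · rw [div_le_iff₀ hM0]
      have h1 : ((k i : ℕ):ℝ) ≤ (⌊(M:ℝ)*x i⌋₊ : ℝ) := by
        exact_mod_cast min_le_left (⌊(M:ℝ)*x i⌋₊) (M-1)
      have h2 : (⌊(M:ℝ)*x i⌋₊ : ℝ) ≤ (M:ℝ)*x i := Nat.floor_le (mul_nonneg hM0.le (hx0 i))
      nlinarith
    · rw [le_div_iff₀ hM0]
      by_cases hc : ⌊(M:ℝ)*x i⌋₊ ≤ M - 1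
      · have hki : k i = ⌊(M:ℝ)*x i⌋₊ := min_eq_left hc
        have h2 : (M:ℝ)*x i < (⌊(M:ℝ)*x i⌋₊ : ℝ) + 1 := Nat.lt_floor_add_one _
        rw [hki]
        nlinarith
      · have hki : k i = M - 1 := min_eq_right (by omega)
        have hcast : ((M - 1 : ℕ):ℝ) + 1 = (M:ℝ) := by
          rw [Nat.cast_sub (by omega : 1 ≤ M)]; simp
        rw [hki, hcast]
        nlinarith [hx1 i]
  obtain ⟨a, c, hrep⟩ := ha k hk
  have hz : ∀ j, a j = 0 := fun j => key _ j k hk rfl a c hrep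
  have e1 : f x - g x = c := by rw [hrep x hxc]; simp [hz]
  have e2 : f (fun m => (k m:ℝ)/M) - g (fun m => (k m:ℝ)/M) = c := by
    rw [hrep _ (hvm k)]; simp [hz]
  have e3 := key2 (∑ i, k i) k hk rfl
  linarith
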